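/- Let σ_e, σ_d, σ_W > 0, λ > 0 with λσ_W² < σ_d², μ_e, μ_d ∈ ℝ, δ = μ_e − μ_d. Set γ = √(√(σ_W²/(λσ_d²)) − σ_W²/σ_d²), A = γ, K = γσ_d√λ/σ_W, and for (m,w) ∈ ℝ² define U(m,w) = K(A(m − μ_d) + w) + μ_d. Then: (i) the integral of (m − U(m,w))² + λA²(m − μ_d)² with respect to (gaussianReal μ_e σ_e²) ⊗ (gaussianReal 0 σ_W²) equals √(λσ_d²σ_W²)·(σ_e² + σ_d² + δ²)/σ_d² − λσ_W²; and (ii) the integral of (m − U(m,w))² with respect to (gaussianReal μ_d σ_d²) ⊗ (gaussianReal 0 σ_W²) equals √(λσ_d²σ_W²). -/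

import Mathlib

open MeasureTheory ProbabilityTheory Real Set Filter
open scoped NNReal ENNReal

-- x^2 * exp over Ioi 0
lemma I2pos {b : ℝ} (hb : 0 < b) :
    ∫ x in Ioi (0:ℝ), x ^ 2 * Real.exp (-b * x ^ 2) = Real.sqrt π / (4 * b * Real.sqrt b) := by
  have h := integral_rpow_mul_exp_neg_mul_rpow (p := 2) (q := 2) two_pos (by norm_num) hb
  have hcongr : ∫ x in Ioi (0:ℝ), x ^ (2:ℝ) * Real.exp (-b * x ^ (2:ℝ))
      = ∫ x in Ioi (0:ℝ), x ^ 2 * Real.exp (-b * x ^ 2) := by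
    refine setIntegral_congr_fun measurableSet_Ioi (fun x hx => ?_)
    rw [show (2:ℝ) = ((2:ℕ):ℝ) by norm_num, Real.rpow_natCast]
  rw [hcongr] at h
  rw [h]
  have hgam : Real.Gamma ((2 + 1) / 2) = Real.sqrt π / 2 := by
    rw [show ((2:ℝ) + 1) / 2 = 1/2 + 1 by norm_num, Real.Gamma_add_one (by norm_num),
      Real.Gamma_one_half_eq]
    ring
  rw [hgam]
  have hb' : b ^ (-((2:ℝ) + 1) / 2) = 1 / (b * Real.sqrt b) := by
    rw [show (-((2:ℝ)+1)/2) = -(1 + 1/2) by norm_num, Real.rpow_neg hb.le,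
      Real.rpow_add hb, Real.rpow_one, ← Real.sqrt_eq_rpow]
    field_simp
  rw [hb']
  have h1 : Real.sqrt b > 0 := Real.sqrt_pos.2 hb
  rw [eq_div_iff (by positivity)]
  field_simp
  ring

lemma I2line {b : ℝ} (hb : 0 < b) :
    ∫ x : ℝ, x ^ 2 * Real.exp (-b * x ^ 2) = Real.sqrt π / (2 * b * Real.sqrt b) := by
  have h := integral_comp_abs (f := fun t : ℝ => t ^ 2 * Real.exp (-b * t ^ 2))
  simp only [sq_abs] at h
  rw [h, I2pos hb]
  have h1 : Real.sqrt b > 0 := Real.sqrt_pos.2 hb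
  field_simp
  ring

lemma I1line (b : ℝ) : ∫ x : ℝ, x * Real.exp (-b * x ^ 2) = 0 := by
  have h := integral_neg_eq_self (fun x : ℝ => x * Real.exp (-b * x ^ 2)) volume
  simp only [neg_sq, neg_mul, integral_neg] at h
  simp only [neg_mul]
  linarith

lemma Int2line {b : ℝ} (hb : 0 < b) :
    Integrable (fun x : ℝ => x ^ 2 * Real.exp (-b * x ^ 2)) := by
  have h := integrable_rpow_mul_exp_neg_mul_sq hb (s := 2) (by norm_num)
  have : (fun x : ℝ => x ^ (2:ℝ) * Real.exp (-b * x ^ 2))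
      = fun x : ℝ => x ^ 2 * Real.exp (-b * x ^ 2) := by
    funext x
    rw [show (2:ℝ) = ((2:ℕ):ℝ) by norm_num, Real.rpow_natCast]
  rwa [this] at h

lemma Int1line {b : ℝ} (hb : 0 < b) :
    Integrable (fun x : ℝ => x * Real.exp (-b * x ^ 2)) :=
  integrable_mul_exp_neg_mul_sq hb

section pdfLemmas

variable {v : ℝ≥0} (μ : ℝ) (hv : 0 < (v:ℝ))

lemma pdf0_eq (y : ℝ) :
    gaussianPDFReal 0 v y
      = (Real.sqrt (2 * π * v))⁻¹ * Real.exp (-(2 * (v:ℝ))⁻¹ * y ^ 2) := by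
  rw [gaussianPDFReal]
  congr 1
  rw [sub_zero]
  congr 1
  field_simp

lemma pdf_shift (x : ℝ) : gaussianPDFReal μ v x = gaussianPDFReal 0 v (x - μ) := by
  rw [gaussianPDFReal_sub, zero_add]

include hv

lemma GInt1 : Integrable (fun x => gaussianPDFReal μ v x * (x - μ)) := by
  have hb : 0 < (2 * (v:ℝ))⁻¹ := by positivity
  have base : Integrable (fun y => gaussianPDFReal 0 v y * y) := by
    have h := (Int1line hb).const_mul (Real.sqrt (2 * π * v))⁻¹
    have heq : (fun y => gaussianPDFReal 0 v y * y)
        = fun y => (Real.sqrt (2 * π * v))⁻¹ * (y * Real.exp (-(2 * (v:ℝ))⁻¹ * y ^ 2)) := by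
      funext y; rw [pdf0_eq]; ring
    rwa [heq]
  have heq2 : (fun x => gaussianPDFReal μ v x * (x - μ))
      = fun x => (fun y => gaussianPDFReal 0 v y * y) (x - μ) := by
    funext x; rw [pdf_shift μ x]
  rw [heq2]
  exact base.comp_sub_right μ

lemma GInt2 : Integrable (fun x => gaussianPDFReal μ v x * (x - μ) ^ 2) := by
  have hb : 0 < (2 * (v:ℝ))⁻¹ := by positivity
  have base : Integrable (fun y => gaussianPDFReal 0 v y * y ^ 2) := by
    have h := (Int2line hb).const_mul (Real.sqrt (2 * π * v))⁻¹
    have heq : (fun y => gaussianPDFReal 0 v y * y ^ 2)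
        = fun y => (Real.sqrt (2 * π * v))⁻¹ * (y ^ 2 * Real.exp (-(2 * (v:ℝ))⁻¹ * y ^ 2)) := by
      funext y; rw [pdf0_eq]; ring
    rwa [heq]
  have heq2 : (fun x => gaussianPDFReal μ v x * (x - μ) ^ 2)
      = fun x => (fun y => gaussianPDFReal 0 v y * y ^ 2) (x - μ) := by
    funext x; rw [pdf_shift μ x]
  rw [heq2]
  exact base.comp_sub_right μ

lemma G1 : ∫ x, gaussianPDFReal μ v x * (x - μ) = 0 := by
  have heq : (fun x => gaussianPDFReal μ v x * (x - μ))
      = fun x => (fun y => gaussianPDFReal 0 v y * y) (x - μ) := by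
    funext x; rw [pdf_shift μ x]
  rw [heq, integral_sub_right_eq_self (fun y => gaussianPDFReal 0 v y * y) μ]
  have hb : 0 < (2 * (v:ℝ))⁻¹ := by positivity
  calc ∫ y, gaussianPDFReal 0 v y * y
      = ∫ y, (Real.sqrt (2 * π * v))⁻¹ * (y * Real.exp (-(2 * (v:ℝ))⁻¹ * y ^ 2)) := by
        congr 1; funext y; rw [pdf0_eq]; ring
    _ = (Real.sqrt (2 * π * v))⁻¹ * ∫ y, y * Real.exp (-(2 * (v:ℝ))⁻¹ * y ^ 2) :=
        integral_const_mul _ _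
    _ = 0 := by rw [I1line]; ring

lemma G2 : ∫ x, gaussianPDFReal μ v x * (x - μ) ^ 2 = v := by
  have heq : (fun x => gaussianPDFReal μ v x * (x - μ) ^ 2)
      = fun x => (fun y => gaussianPDFReal 0 v y * y ^ 2) (x - μ) := by
    funext x; rw [pdf_shift μ x]
  rw [heq, integral_sub_right_eq_self (fun y => gaussianPDFReal 0 v y * y ^ 2) μ]
  have hb : 0 < (2 * (v:ℝ))⁻¹ := by positivity
  calc ∫ y, gaussianPDFReal 0 v y * y ^ 2
      = ∫ y, (Real.sqrt (2 * π * v))⁻¹ * (y ^ 2 * Real.exp (-(2 * (v:ℝ))⁻¹ * y ^ 2)) := by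
        congr 1; funext y; rw [pdf0_eq]; ring
    _ = (Real.sqrt (2 * π * v))⁻¹ * ∫ y, y ^ 2 * Real.exp (-(2 * (v:ℝ))⁻¹ * y ^ 2) :=
        integral_const_mul _ _
    _ = (v:ℝ) := by
        rw [I2line hb]
        have h1 : Real.sqrt (2 * π * (v:ℝ)) = Real.sqrt (2 * (v:ℝ)) * Real.sqrt π := by
          rw [show 2 * π * (v:ℝ) = (2 * (v:ℝ)) * π by ring, Real.sqrt_mul (by positivity)]
        have h2 : Real.sqrt ((2 * (v:ℝ))⁻¹) = (Real.sqrt (2 * (v:ℝ)))⁻¹ := Real.sqrt_inv _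
        have h3 : 0 < Real.sqrt (2 * (v:ℝ)) := Real.sqrt_pos.2 (by positivity)
        have h4 : 0 < Real.sqrt π := Real.sqrt_pos.2 pi_pos
        have h5 : Real.sqrt (2 * (v:ℝ)) ^ 2 = 2 * (v:ℝ) := Real.sq_sqrt (by positivity)
        rw [h1, h2]
        field_simp

end pdfLemmas

section measureLemmas

lemma gauss_density (μ : ℝ) {v : ℝ≥0} (hv : v ≠ 0) :
    gaussianReal μ v
      = volume.withDensity (fun x => ((gaussianPDFReal μ v x).toNNReal : ℝ≥0∞)) := by
  rw [gaussianReal_of_var_ne_zero _ hv]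
  rfl

lemma gauss_integral_eq (μ : ℝ) {v : ℝ≥0} (hv : v ≠ 0) (g : ℝ → ℝ) :
    ∫ x, g x ∂(gaussianReal μ v) = ∫ x, gaussianPDFReal μ v x * g x := by
  rw [gauss_density μ hv,
    integral_withDensity_eq_integral_smul (measurable_gaussianPDFReal μ v).real_toNNReal g]
  congr 1
  funext x
  rw [NNReal.smul_def, Real.coe_toNNReal _ (gaussianPDFReal_nonneg μ v x), smul_eq_mul]

lemma gauss_integrable_iff (μ : ℝ) {v : ℝ≥0} (hv : v ≠ 0) (g : ℝ → ℝ) :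
    Integrable g (gaussianReal μ v)
      ↔ Integrable (fun x => gaussianPDFReal μ v x * g x) volume := by
  rw [gauss_density μ hv,
    integrable_withDensity_iff_integrable_smul (measurable_gaussianPDFReal μ v).real_toNNReal]
  have heq : (fun x => (gaussianPDFReal μ v x).toNNReal • g x)
      = fun x => gaussianPDFReal μ v x * g x := by
    funext x
    rw [NNReal.smul_def, Real.coe_toNNReal _ (gaussianPDFReal_nonneg μ v x), smul_eq_mul]
  rw [heq]

variable (μ1 μd : ℝ) {v : ℝ≥0} (hv : 0 < (v:ℝ))

include hv

lemma vne : v ≠ 0 := fun h => by simp [h] at hv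

lemma M_int1 : Integrable (fun x => x - μd) (gaussianReal μ1 v) := by
  rw [gauss_integrable_iff μ1 (vne hv)]
  have heq : (fun x => gaussianPDFReal μ1 v x * (x - μd))
      = fun x => gaussianPDFReal μ1 v x * (x - μ1) + (μ1 - μd) * gaussianPDFReal μ1 v x := by
    funext x; ring
  rw [heq]
  exact (GInt1 μ1 hv).add ((integrable_gaussianPDFReal μ1 v).const_mul _)

lemma M_int2 : Integrable (fun x => (x - μd) ^ 2) (gaussianReal μ1 v) := by
  rw [gauss_integrable_iff μ1 (vne hv)]
  have heq : (fun x => gaussianPDFReal μ1 v x * (x - μd) ^ 2)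
      = fun x => gaussianPDFReal μ1 v x * (x - μ1) ^ 2
        + ((2 * (μ1 - μd)) * (gaussianPDFReal μ1 v x * (x - μ1))
          + ((μ1 - μd) ^ 2) * gaussianPDFReal μ1 v x) := by
    funext x; ring
  rw [heq]
  exact (GInt2 μ1 hv).add (((GInt1 μ1 hv).const_mul _).add
    ((integrable_gaussianPDFReal μ1 v).const_mul _))

lemma M_1 : ∫ x, (x - μd) ∂(gaussianReal μ1 v) = μ1 - μd := by
  rw [gauss_integral_eq μ1 (vne hv)]
  have heq : (fun x => gaussianPDFReal μ1 v x * (x - μd))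
      = fun x => gaussianPDFReal μ1 v x * (x - μ1) + (μ1 - μd) * gaussianPDFReal μ1 v x := by
    funext x; ring
  rw [heq, integral_add (GInt1 μ1 hv) ((integrable_gaussianPDFReal μ1 v).const_mul _),
    G1 μ1 hv, integral_const_mul, integral_gaussianPDFReal_eq_one μ1 (vne hv)]
  ring

lemma M_2 : ∫ x, (x - μd) ^ 2 ∂(gaussianReal μ1 v) = (v:ℝ) + (μ1 - μd) ^ 2 := by
  rw [gauss_integral_eq μ1 (vne hv)]
  have heq : (fun x => gaussianPDFReal μ1 v x * (x - μd) ^ 2)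
      = fun x => gaussianPDFReal μ1 v x * (x - μ1) ^ 2
        + ((2 * (μ1 - μd)) * (gaussianPDFReal μ1 v x * (x - μ1))
          + ((μ1 - μd) ^ 2) * gaussianPDFReal μ1 v x) := by
    funext x; ring
  have ha : Integrable (fun x => 2 * (μ1 - μd) * (gaussianPDFReal μ1 v x * (x - μ1))) volume :=
    (GInt1 μ1 hv).const_mul _
  have hb : Integrable (fun x => (μ1 - μd) ^ 2 * gaussianPDFReal μ1 v x) volume :=
    (integrable_gaussianPDFReal μ1 v).const_mul _
  have hab : Integrable (fun x => 2 * (μ1 - μd) * (gaussianPDFReal μ1 v x * (x - μ1))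
      + (μ1 - μd) ^ 2 * gaussianPDFReal μ1 v x) volume := ha.add hb
  rw [heq, integral_add (GInt2 μ1 hv) hab, integral_add ha hb,
    G2 μ1 hv, integral_const_mul, integral_const_mul, G1 μ1 hv,
    integral_gaussianPDFReal_eq_one μ1 (vne hv)]
  ring

end measureLemmas

lemma prod_master (μ1 μd : ℝ) (v1 v2 : ℝ≥0) (hv1 : 0 < (v1:ℝ)) (hv2 : 0 < (v2:ℝ))
    (a b c : ℝ) :
    ∫ p : ℝ × ℝ, ((a * (p.1 - μd) + b * p.2) ^ 2 + c * (p.1 - μd) ^ 2)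
        ∂((gaussianReal μ1 v1).prod (gaussianReal 0 v2))
      = (a ^ 2 + c) * ((v1:ℝ) + (μ1 - μd) ^ 2) + b ^ 2 * (v2:ℝ) := by
  have hQid : Integrable (fun w : ℝ => w) (gaussianReal 0 v2) := by
    have := M_int1 0 0 hv2; simpa using this
  have hQ2 : Integrable (fun w : ℝ => w ^ 2) (gaussianReal 0 v2) := by
    have := M_int2 0 0 hv2; simpa using this
  have hQ1v : ∫ w, w ∂(gaussianReal 0 v2) = 0 := by
    have := M_1 0 0 hv2; simpa using this
  have hQ2v : ∫ w, w ^ 2 ∂(gaussianReal 0 v2) = (v2:ℝ) := by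
    have := M_2 0 0 hv2; simpa using this
  have hP1 : Integrable (fun x : ℝ => 2 * a * (x - μd)) (gaussianReal μ1 v1) :=
    (M_int1 μ1 μd hv1).const_mul _
  have hP2 : Integrable (fun x : ℝ => (a ^ 2 + c) * (x - μd) ^ 2) (gaussianReal μ1 v1) :=
    (M_int2 μ1 μd hv1).const_mul _
  have h1 : Integrable (fun p : ℝ × ℝ => ((a ^ 2 + c) * (p.1 - μd) ^ 2) * (1 : ℝ))
      ((gaussianReal μ1 v1).prod (gaussianReal 0 v2)) := hP2.mul_prod (integrable_const 1)
  have h2 : Integrable (fun p : ℝ × ℝ => (2 * a * (p.1 - μd)) * (b * p.2))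
      ((gaussianReal μ1 v1).prod (gaussianReal 0 v2)) := hP1.mul_prod (hQid.const_mul b)
  have h3 : Integrable (fun p : ℝ × ℝ => (1 : ℝ) * (b ^ 2 * p.2 ^ 2))
      ((gaussianReal μ1 v1).prod (gaussianReal 0 v2)) :=
    (integrable_const 1).mul_prod (hQ2.const_mul _)
  have h23 : Integrable (fun p : ℝ × ℝ => (2 * a * (p.1 - μd)) * (b * p.2)
      + (1 : ℝ) * (b ^ 2 * p.2 ^ 2))
      ((gaussianReal μ1 v1).prod (gaussianReal 0 v2)) := h2.add h3
  have heq : (fun p : ℝ × ℝ => (a * (p.1 - μd) + b * p.2) ^ 2 + c * (p.1 - μd) ^ 2)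
      = fun p : ℝ × ℝ => ((a ^ 2 + c) * (p.1 - μd) ^ 2) * (1 : ℝ)
        + ((2 * a * (p.1 - μd)) * (b * p.2) + (1 : ℝ) * (b ^ 2 * p.2 ^ 2)) := by
    funext p; ring
  rw [heq, integral_add h1 h23, integral_add h2 h3,
    integral_prod_mul (fun x : ℝ => (a ^ 2 + c) * (x - μd) ^ 2) (fun _ : ℝ => (1 : ℝ)),
    integral_prod_mul (fun x : ℝ => 2 * a * (x - μd)) (fun w : ℝ => b * w),
    integral_prod_mul (fun _ : ℝ => (1 : ℝ)) (fun w : ℝ => b ^ 2 * w ^ 2),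
    integral_const_mul, integral_const_mul, integral_const_mul, integral_const_mul,
    M_2 μ1 μd hv1, M_1 μ1 μd hv1, hQ1v, hQ2v, integral_const, integral_const]
  simp

theorem stmt12 (σe σd σW lam μe μd : ℝ)
    (hσe : 0 < σe) (hσd : 0 < σd) (hσW : 0 < σW) (hlam : 0 < lam)
    (hcond : lam * σW ^ 2 < σd ^ 2) :
    let δ : ℝ := μe - μd
    let γ : ℝ := Real.sqrt (Real.sqrt (σW ^ 2 / (lam * σd ^ 2)) - σW ^ 2 / σd ^ 2)
    let A : ℝ := γ
    let K : ℝ := γ * σd * Real.sqrt lam / σW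
    let U : ℝ × ℝ → ℝ := fun p => K * (A * (p.1 - μd) + p.2) + μd
    (∫ p, ((p.1 - U p) ^ 2 + lam * A ^ 2 * (p.1 - μd) ^ 2)
        ∂((gaussianReal μe ⟨σe ^ 2, sq_nonneg σe⟩).prod
            (gaussianReal 0 ⟨σW ^ 2, sq_nonneg σW⟩))
      = Real.sqrt (lam * σd ^ 2 * σW ^ 2) * (σe ^ 2 + σd ^ 2 + δ ^ 2) / σd ^ 2
        - lam * σW ^ 2)
    ∧ (∫ p, (p.1 - U p) ^ 2
        ∂((gaussianReal μd ⟨σd ^ 2, sq_nonneg σd⟩).prod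
            (gaussianReal 0 ⟨σW ^ 2, sq_nonneg σW⟩))
      = Real.sqrt (lam * σd ^ 2 * σW ^ 2)) := by
  intro δ γ A K U
  have hδ : δ = μe - μd := rfl
  have hA : A = γ := rfl
  set sl := Real.sqrt lam with hsl_def
  have hsl : 0 < sl := Real.sqrt_pos.2 hlam
  have hsl2 : sl ^ 2 = lam := Real.sq_sqrt hlam.le
  have hK : K = γ * σd * sl / σW := rfl
  have hslW : sl * σW < σd := by
    have h1 : (sl * σW) ^ 2 < σd ^ 2 := by rw [mul_pow, hsl2]; exact hcond
    exact lt_of_pow_lt_pow_left₀ 2 hσd.le h1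
  have hs_eq : Real.sqrt (σW ^ 2 / (lam * σd ^ 2)) = σW / (σd * sl) := by
    rw [show σW ^ 2 / (lam * σd ^ 2) = (σW / (σd * sl)) ^ 2 by
      rw [div_pow, mul_pow, hsl2, mul_comm lam (σd ^ 2)]]
    exact Real.sqrt_sq (by positivity)
  have hinner : 0 ≤ σW / (σd * sl) - σW ^ 2 / σd ^ 2 := by
    rw [sub_nonneg, div_le_div_iff₀ (by positivity) (by positivity)]
    nlinarith [mul_lt_mul_of_pos_left hslW (mul_pos hσW hσd)]
  have hγ2 : γ ^ 2 = σW / (σd * sl) - σW ^ 2 / σd ^ 2 := by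
    rw [show γ = Real.sqrt (Real.sqrt (σW ^ 2 / (lam * σd ^ 2)) - σW ^ 2 / σd ^ 2) from rfl,
      hs_eq]
    exact Real.sq_sqrt hinner
  have hKA : (1 : ℝ) - K * A = sl * σW / σd := by
    rw [hK, hA, show γ * σd * sl / σW * γ = γ ^ 2 * σd * sl / σW by ring, hγ2]
    field_simp
    ring
  have hK2 : K ^ 2 = sl * σd / σW - lam := by
    rw [hK, show (γ * σd * sl / σW) ^ 2 = γ ^ 2 * σd ^ 2 * sl ^ 2 / σW ^ 2 by ring, hγ2, ← hsl2]
    field_simp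
  have hlg : lam * γ ^ 2 = sl * σW / σd - lam * σW ^ 2 / σd ^ 2 := by
    rw [hγ2, ← hsl2]
    field_simp
  have hsqp : Real.sqrt (lam * σd ^ 2 * σW ^ 2) = sl * σd * σW := by
    rw [show lam * σd ^ 2 * σW ^ 2 = (sl * σd * σW) ^ 2 by rw [mul_pow, mul_pow, hsl2],
      Real.sqrt_sq (by positivity)]
  have hv2 : (0:ℝ) < ((⟨σW ^ 2, sq_nonneg σW⟩ : ℝ≥0) : ℝ) := pow_pos hσW 2
  constructor
  · have hv1 : (0:ℝ) < ((⟨σe ^ 2, sq_nonneg σe⟩ : ℝ≥0) : ℝ) := pow_pos hσe 2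
    have hmaster := prod_master μe μd ⟨σe ^ 2, sq_nonneg σe⟩ ⟨σW ^ 2, sq_nonneg σW⟩ hv1 hv2
      (1 - K * A) (-K) (lam * A ^ 2)
    have heq : (fun p : ℝ × ℝ => (p.1 - U p) ^ 2 + lam * A ^ 2 * (p.1 - μd) ^ 2)
        = fun p : ℝ × ℝ => ((1 - K * A) * (p.1 - μd) + (-K) * p.2) ^ 2
          + (lam * A ^ 2) * (p.1 - μd) ^ 2 := by
      funext p
      show (p.1 - (K * (A * (p.1 - μd) + p.2) + μd)) ^ 2 + lam * A ^ 2 * (p.1 - μd) ^ 2 = _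
      ring
    rw [heq, hmaster, hδ, hsqp, hA, neg_sq, hKA, hK2]
    change ((sl * σW / σd) ^ 2 + lam * γ ^ 2) * (σe ^ 2 + (μe - μd) ^ 2) + (sl * σd / σW - lam) * σW ^ 2 =
      sl * σd * σW * (σe ^ 2 + σd ^ 2 + (μe - μd) ^ 2) / σd ^ 2 - lam * σW ^ 2
    rw [show (sl * σW / σd) ^ 2 + lam * γ ^ 2
        = (sl * σW / σd) ^ 2 + (sl * σW / σd - lam * σW ^ 2 / σd ^ 2) from by rw [hlg]]
    rw [← hsl2]
    field_simp
    ring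
  · have hv1 : (0:ℝ) < ((⟨σd ^ 2, sq_nonneg σd⟩ : ℝ≥0) : ℝ) := pow_pos hσd 2
    have hmaster := prod_master μd μd ⟨σd ^ 2, sq_nonneg σd⟩ ⟨σW ^ 2, sq_nonneg σW⟩ hv1 hv2
      (1 - K * A) (-K) 0
    have heq : (fun p : ℝ × ℝ => (p.1 - U p) ^ 2)
        = fun p : ℝ × ℝ => ((1 - K * A) * (p.1 - μd) + (-K) * p.2) ^ 2
          + (0:ℝ) * (p.1 - μd) ^ 2 := by
      funext p
      show (p.1 - (K * (A * (p.1 - μd) + p.2) + μd)) ^ 2 = _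
      ring
    rw [heq, hmaster, hsqp, neg_sq, hKA, hK2]
    change ((sl * σW / σd) ^ 2 + 0) * (σd ^ 2 + (μd - μd) ^ 2) + (sl * σd / σW - lam) * σW ^ 2 =
      sl * σd * σW
    rw [← hsl2]
    field_simp
    ring
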